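/- Suppose the Hamiltonian H is L_H-smooth, attains its minimum value 0 at some point x* with ξ(x*) = 0, satisfies the Polyak–Łojasiewicz condition with constant μ > 0 (½‖∇H(x)‖² ≥ μ·H(x) for all x), and satisfies the expected residual condition with constant ρ ≥ 0: (1/n²)∑_{i,j=1}^n ‖∇H_{i,j}(x) − ∇H_{i,j}(x*) − (∇H(x) − ∇H(x*))‖² ≤ 2ρ·H(x) for all x ∈ ℝ^d. Set σ² = (1/n²)∑_{i,j=1}^n ‖∇H_{i,j}(x*)‖². Then for any constant step size γ^k ≡ γ with 0 < γ ≤ μ/(L_H(μ + 2ρ)), the SHGD iterates satisfy E[H(x^k)] ≤ (1 − γμ)^k H(x⁰) + L_H γσ²/μ for all k ≥ 0. -/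

import Mathlib

/-!
STATEMENT 11: SHGD with constant step size γ ≤ μ/(L_H(μ+2ρ)) under L_H-smoothness,
the PL condition, and the expected residual condition:
E[H(x^k)] ≤ (1 − γμ)^k H(x⁰) + L_H γσ²/μ.
-/

open scoped RealInnerProductSpace BigOperators

noncomputable section

variable {n d1 d2 : ℕ}

/-- The signed gradient field ξᵢ(x) = (∇_{x1} gᵢ(x), −∇_{x2} gᵢ(x)). -/
def xi (g : EuclideanSpace ℝ (Fin d1 ⊕ Fin d2) → ℝ)
    (x : EuclideanSpace ℝ (Fin d1 ⊕ Fin d2)) : EuclideanSpace ℝ (Fin d1 ⊕ Fin d2) :=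
  (WithLp.equiv 2 _).symm (Sum.elim
    (fun a => gradient g x (Sum.inl a))
    (fun j => -(gradient g x (Sum.inr j))))

/-- ξ(x) = (1/n) ∑ᵢ ξᵢ(x). -/
def xiBar (g : Fin n → EuclideanSpace ℝ (Fin d1 ⊕ Fin d2) → ℝ)
    (x : EuclideanSpace ℝ (Fin d1 ⊕ Fin d2)) : EuclideanSpace ℝ (Fin d1 ⊕ Fin d2) :=
  (n : ℝ)⁻¹ • ∑ i, xi (g i) x

/-- The Hamiltonian component H_{i,j}(x) = ½⟨ξᵢ(x), ξⱼ(x)⟩. -/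
def HamComp (g : Fin n → EuclideanSpace ℝ (Fin d1 ⊕ Fin d2) → ℝ) (i j : Fin n)
    (x : EuclideanSpace ℝ (Fin d1 ⊕ Fin d2)) : ℝ :=
  (1 / 2 : ℝ) * ⟪xi (g i) x, xi (g j) x⟫

/-- The Hamiltonian H(x) = ½‖ξ(x)‖². -/
def Ham (g : Fin n → EuclideanSpace ℝ (Fin d1 ⊕ Fin d2) → ℝ)
    (x : EuclideanSpace ℝ (Fin d1 ⊕ Fin d2)) : ℝ :=
  (1 / 2 : ℝ) * ‖xiBar g x‖ ^ 2

/-- `shgdExp g γ t k φ x` is the expectation E[φ(x^{t+k}) | x^t = x] for the SHGD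
iteration x^{m+1} = x^m − γ^m ∇H_{i_m,j_m}(x^m) with (i_m, j_m) i.i.d. uniform on
{1,…,n}².  In particular `shgdExp g γ 0 k φ x⁰ = E[φ(x^k)]`. -/
def shgdExp (g : Fin n → EuclideanSpace ℝ (Fin d1 ⊕ Fin d2) → ℝ) (γ : ℕ → ℝ) :
    ℕ → ℕ → (EuclideanSpace ℝ (Fin d1 ⊕ Fin d2) → ℝ) →
      EuclideanSpace ℝ (Fin d1 ⊕ Fin d2) → ℝ
  | _, 0, φ => φ
  | t, k + 1, φ => fun x => ((n : ℝ) ^ 2)⁻¹ * ∑ i, ∑ j,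
      shgdExp g γ (t + 1) k φ (x - γ t • gradient (HamComp g i j) x)

/-- The linear map flipping the sign of the second block of coordinates. -/
def flipMap (d1 d2 : ℕ) :
    EuclideanSpace ℝ (Fin d1 ⊕ Fin d2) →L[ℝ] EuclideanSpace ℝ (Fin d1 ⊕ Fin d2) :=
  LinearMap.toContinuousLinearMap
  { toFun := fun v => (WithLp.equiv 2 _).symm (Sum.elim
      (fun a => v (Sum.inl a)) (fun j => -(v (Sum.inr j))))
    map_add' := by
      intro v w
      ext k
      cases k <;> simp [PiLp.toLp_apply] <;> ring
    map_smul' := by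
      intro c v
      ext k
      cases k <;> simp [PiLp.toLp_apply] }

lemma contDiff_gradient {f : EuclideanSpace ℝ (Fin d1 ⊕ Fin d2) → ℝ}
    (hf : ContDiff ℝ 2 f) : ContDiff ℝ 1 (gradient f) := by
  have h1 : ContDiff ℝ 1 (fderiv ℝ f) := hf.fderiv_right (le_refl _)
  have h2 : gradient f = fun x => (InnerProductSpace.toDual ℝ _).symm (fderiv ℝ f x) := rfl
  rw [h2]
  exact (InnerProductSpace.toDual ℝ _).symm.toContinuousLinearEquiv.toContinuousLinearMap.contDiff.comp h1

lemma xi_eq_flip (f : EuclideanSpace ℝ (Fin d1 ⊕ Fin d2) → ℝ) :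
    xi f = fun x => flipMap d1 d2 (gradient f x) := rfl

lemma differentiable_xi {f : EuclideanSpace ℝ (Fin d1 ⊕ Fin d2) → ℝ}
    (hf : ContDiff ℝ 2 f) : Differentiable ℝ (xi f) := by
  rw [xi_eq_flip]
  exact ((flipMap d1 d2).contDiff.comp (contDiff_gradient hf)).differentiable one_ne_zero

lemma differentiable_HamComp (g : Fin n → EuclideanSpace ℝ (Fin d1 ⊕ Fin d2) → ℝ)
    (hg : ∀ i, ContDiff ℝ 2 (g i)) (i j : Fin n) :
    Differentiable ℝ (HamComp g i j) := by
  have : HamComp g i j = fun x => (1/2 : ℝ) * ⟪xi (g i) x, xi (g j) x⟫ := rfl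
  rw [this]
  exact ((differentiable_xi (hg i)).inner ℝ (differentiable_xi (hg j))).const_mul _

lemma differentiable_Ham (g : Fin n → EuclideanSpace ℝ (Fin d1 ⊕ Fin d2) → ℝ)
    (hg : ∀ i, ContDiff ℝ 2 (g i)) :
    Differentiable ℝ (Ham g) := by
  have h1 : Differentiable ℝ (xiBar g) := by
    have : xiBar g = fun x => (n : ℝ)⁻¹ • ∑ i, xi (g i) x := rfl
    rw [this]
    exact (Differentiable.fun_sum fun i _ => differentiable_xi (hg i)).const_smul ((n : ℝ)⁻¹)
  have h2 : Ham g = fun x => (1/2 : ℝ) * ⟪xiBar g x, xiBar g x⟫ := by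
    funext x
    rw [Ham, real_inner_self_eq_norm_sq]
  rw [h2]
  exact (h1.inner ℝ h1).const_mul _

lemma hasGradientAt_const_mul_sum {ι : Type*} (s : Finset ι)
    (x : EuclideanSpace ℝ (Fin d1 ⊕ Fin d2))
    (c : ℝ) (f : ι → EuclideanSpace ℝ (Fin d1 ⊕ Fin d2) → ℝ) (hf : ∀ i ∈ s, DifferentiableAt ℝ (f i) x) :
    HasGradientAt (fun y => c * ∑ i ∈ s, f i y) (c • ∑ i ∈ s, gradient (f i) x) x := by
  rw [hasGradientAt_iff_hasFDerivAt]
  have h1 : ∀ i ∈ s, HasFDerivAt (f i)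
      ((InnerProductSpace.toDual ℝ _) (gradient (f i) x)) x := by
    intro i hi
    rw [← hasGradientAt_iff_hasFDerivAt]
    exact (hf i hi).hasGradientAt
  have h2 := (HasFDerivAt.sum h1).const_mul c
  convert h2 using 1
  · rfl
  · funext y; rw [Finset.sum_apply]
  have : ((InnerProductSpace.toDual ℝ _) (c • ∑ i ∈ s, gradient (f i) x) : EuclideanSpace ℝ (Fin d1 ⊕ Fin d2) →L[ℝ] ℝ)
      = c • ∑ i ∈ s, ((InnerProductSpace.toDual ℝ _) (gradient (f i) x) : EuclideanSpace ℝ (Fin d1 ⊕ Fin d2) →L[ℝ] ℝ) := by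
    rw [map_smul, map_sum]
  rw [this]

lemma Ham_eq_sum (g : Fin n → EuclideanSpace ℝ (Fin d1 ⊕ Fin d2) → ℝ)
    (x : EuclideanSpace ℝ (Fin d1 ⊕ Fin d2)) :
    Ham g x = ((n : ℝ) ^ 2)⁻¹ * ∑ i, ∑ j, HamComp g i j x := by
  rw [Ham, ← real_inner_self_eq_norm_sq]
  simp only [xiBar, real_inner_smul_left, real_inner_smul_right, sum_inner, inner_sum,
    HamComp, Finset.mul_sum]
  rw [Finset.sum_congr rfl]
  intro i _
  rw [Finset.sum_congr rfl]
  intro j _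
  rw [real_inner_comm (xi (g j) x), sq, mul_inv]
  ring

lemma gradient_Ham_eq (g : Fin n → EuclideanSpace ℝ (Fin d1 ⊕ Fin d2) → ℝ)
    (hg : ∀ i, ContDiff ℝ 2 (g i)) (x : EuclideanSpace ℝ (Fin d1 ⊕ Fin d2)) :
    gradient (Ham g) x = ((n : ℝ) ^ 2)⁻¹ • ∑ i, ∑ j, gradient (HamComp g i j) x := by
  have hfun : Ham g = fun y => ((n : ℝ) ^ 2)⁻¹ *
      ∑ p : Fin n × Fin n, HamComp g p.1 p.2 y := by
    funext y
    rw [Ham_eq_sum, Fintype.sum_prod_type]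
  have h := hasGradientAt_const_mul_sum (Finset.univ (α := Fin n × Fin n)) x
    ((n : ℝ) ^ 2)⁻¹ (fun p => HamComp g p.1 p.2)
    (fun p _ => (differentiable_HamComp g hg p.1 p.2 x :
      DifferentiableAt ℝ ((fun p : Fin n × Fin n => HamComp g p.1 p.2) p) x))
  rw [hfun, h.gradient, Fintype.sum_prod_type]

lemma descent_lemma {f : EuclideanSpace ℝ (Fin d1 ⊕ Fin d2) → ℝ}
    (hf : Differentiable ℝ f) {L : ℝ}
    (hL : ∀ x y, ‖gradient f x - gradient f y‖ ≤ L * ‖x - y‖)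
    (x y : EuclideanSpace ℝ (Fin d1 ⊕ Fin d2)) :
    f y ≤ f x + ⟪gradient f x, y - x⟫ + L / 2 * ‖y - x‖ ^ 2 := by
  set v := y - x with hv
  set G := gradient f x with hG
  set φ : ℝ → ℝ := fun t => f (x + t • v) - t * ⟪G, v⟫ - (L / 2 * ‖v‖ ^ 2) * t ^ 2 with hφ
  have hDφ : ∀ t : ℝ, HasDerivAt φ
      (⟪gradient f (x + t • v), v⟫ - ⟪G, v⟫ - (L / 2 * ‖v‖ ^ 2) * (2 * t)) t := by
    intro t
    have hc : HasDerivAt (fun t : ℝ => x + t • v) v t := by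
      simpa using ((hasDerivAt_id t).smul_const v).const_add x
    have hgrad : HasFDerivAt f
        ((InnerProductSpace.toDual ℝ _) (gradient f (x + t • v))) (x + t • v) := by
      rw [← hasGradientAt_iff_hasFDerivAt]
      exact (hf _).hasGradientAt
    have h1 : HasDerivAt (fun t : ℝ => f (x + t • v)) ⟪gradient f (x + t • v), v⟫ t := by
      have := hgrad.comp_hasDerivAt t hc
      rw [InnerProductSpace.toDual_apply_apply] at this
      exact this
    have h2 : HasDerivAt (fun t : ℝ => t * ⟪G, v⟫) ⟪G, v⟫ t := by
      simpa using (hasDerivAt_id t).mul_const (⟪G, v⟫ : ℝ)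
    have h3 : HasDerivAt (fun t : ℝ => (L / 2 * ‖v‖ ^ 2) * t ^ 2)
        ((L / 2 * ‖v‖ ^ 2) * (2 * t)) t := by
      simpa [mul_comm] using (hasDerivAt_pow 2 t).const_mul (L / 2 * ‖v‖ ^ 2)
    exact (h1.sub h2).sub h3
  have hanti : AntitoneOn φ (Set.Icc 0 1) := by
    apply antitoneOn_of_deriv_nonpos (convex_Icc 0 1)
    · exact fun t _ => ((hDφ t).continuousAt).continuousWithinAt
    · exact fun t _ => ((hDφ t).differentiableAt).differentiableWithinAt
    · intro t ht
      rw [interior_Icc] at ht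
      rw [(hDφ t).deriv]
      have hip : ⟪gradient f (x + t • v) - G, v⟫ ≤ ‖gradient f (x + t • v) - G‖ * ‖v‖ :=
        real_inner_le_norm _ _
      have hLip : ‖gradient f (x + t • v) - G‖ ≤ L * (t * ‖v‖) := by
        have := hL (x + t • v) x
        simpa [norm_smul, abs_of_pos ht.1, mul_assoc] using this
      have hvn : (0 : ℝ) ≤ ‖v‖ := norm_nonneg _
      have h1 : ⟪gradient f (x + t • v), v⟫ - ⟪G, v⟫ ≤ L * t * ‖v‖ ^ 2 := by
        have h0 : ⟪gradient f (x + t • v), v⟫ - ⟪G, v⟫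
            = ⟪gradient f (x + t • v) - G, v⟫ := by
          rw [inner_sub_left]
        rw [h0]
        calc ⟪gradient f (x + t • v) - G, v⟫ ≤ ‖gradient f (x + t • v) - G‖ * ‖v‖ := hip
          _ ≤ L * (t * ‖v‖) * ‖v‖ := by
              exact mul_le_mul_of_nonneg_right hLip hvn
          _ = L * t * ‖v‖ ^ 2 := by ring
      nlinarith [h1]
  have h01 : φ 1 ≤ φ 0 := hanti (Set.left_mem_Icc.2 zero_le_one)
    (Set.right_mem_Icc.2 zero_le_one) zero_le_one
  have hφ0 : φ 0 = f x := by simp [hφ]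
  have hφ1 : φ 1 = f y - ⟪G, v⟫ - L / 2 * ‖v‖ ^ 2 := by
    have : x + v = y := by rw [hv]; abel
    simp [hφ, this]
  rw [hφ0, hφ1] at h01
  linarith

set_option maxHeartbeats 2000000 in
theorem shgd_constant_stepsize_PL
    (hn : 0 < n) (g : Fin n → EuclideanSpace ℝ (Fin d1 ⊕ Fin d2) → ℝ)
    (hg : ∀ i, ContDiff ℝ 2 (g i))
    (LH : ℝ)
    -- H is L_H-smooth
    (hsmooth : ∀ x y, ‖gradient (Ham g) x - gradient (Ham g) y‖ ≤ LH * ‖x - y‖)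
    (xstar : EuclideanSpace ℝ (Fin d1 ⊕ Fin d2))
    -- H attains its minimum value 0 at x*, with ξ(x*) = 0
    (hstat : xiBar g xstar = 0) (hH0 : Ham g xstar = 0)
    (hmin : ∀ y, Ham g xstar ≤ Ham g y)
    (μ : ℝ) (hμ : 0 < μ)
    -- PL condition
    (hPL : ∀ x, μ * Ham g x ≤ (1 / 2 : ℝ) * ‖gradient (Ham g) x‖ ^ 2)
    (ρ : ℝ) (hρ : 0 ≤ ρ)
    -- expected residual condition
    (hER : ∀ x, ((n : ℝ) ^ 2)⁻¹ * ∑ i, ∑ j,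
        ‖gradient (HamComp g i j) x - gradient (HamComp g i j) xstar
          - (gradient (Ham g) x - gradient (Ham g) xstar)‖ ^ 2
      ≤ 2 * ρ * Ham g x)
    (σ2 : ℝ)
    (hσ2 : σ2 = ((n : ℝ) ^ 2)⁻¹ * ∑ i, ∑ j, ‖gradient (HamComp g i j) xstar‖ ^ 2)
    (γ : ℝ) (hγ0 : 0 < γ) (hγ : γ ≤ μ / (LH * (μ + 2 * ρ)))
    (x0 : EuclideanSpace ℝ (Fin d1 ⊕ Fin d2)) :
    ∀ k : ℕ, shgdExp g (fun _ => γ) 0 k (Ham g) x0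
      ≤ (1 - γ * μ) ^ k * Ham g x0 + LH * γ * σ2 / μ := by

  -- positivity and constant facts
  classical
  have hσ2nn : 0 ≤ σ2 := by
    rw [hσ2]
    have : (0:ℝ) ≤ ∑ i, ∑ j, ‖gradient (HamComp g i j) xstar‖ ^ 2 :=
      Finset.sum_nonneg fun i _ => Finset.sum_nonneg fun j _ => by positivity
    positivity
  have hdenom : 0 < LH * (μ + 2 * ρ) := by
    by_contra hcon
    push_neg at hcon
    have : μ / (LH * (μ + 2 * ρ)) ≤ 0 := div_nonpos_iff.2 (Or.inl ⟨hμ.le, hcon⟩)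
    linarith
  have hμρ : 0 < μ + 2 * ρ := by linarith
  have hLH : 0 < LH := by
    rcases mul_pos_iff.1 hdenom with ⟨h1, _⟩ | ⟨_, h2⟩
    · exact h1
    · linarith
  have hγle : γ * (LH * (μ + 2 * ρ)) ≤ μ := (le_div_iff₀ hdenom).1 hγ
  have hγLH : γ * LH ≤ 1 := by nlinarith
  have hdiffH : Differentiable ℝ (Ham g) := differentiable_Ham g hg
  have hHnn : ∀ x, 0 ≤ Ham g x := fun x => hH0 ▸ hmin x
  have hn' : ((n:ℝ)^2) ≠ 0 := by positivity
  have hgradstar : gradient (Ham g) xstar = 0 := by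
    have hloc : IsLocalMin (Ham g) xstar := Filter.Eventually.of_forall hmin
    have h2 : fderiv ℝ (Ham g) xstar = 0 := hloc.fderiv_eq_zero
    have h3 : gradient (Ham g) xstar
        = (InnerProductSpace.toDual ℝ _).symm (fderiv ℝ (Ham g) xstar) := rfl
    rw [h3, h2, map_zero]
  -- upper bound on gradient norm: ‖∇H x‖² ≤ 2 L_H H(x)
  have hub : ∀ x, ‖gradient (Ham g) x‖ ^ 2 ≤ 2 * LH * Ham g x := by
    intro x
    set G := gradient (Ham g) x with hGdef
    have hd := descent_lemma hdiffH hsmooth x (x - LH⁻¹ • G)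
    have h1 : x - LH⁻¹ • G - x = -(LH⁻¹ • G) := by abel
    rw [h1] at hd
    have h2 : ⟪G, -(LH⁻¹ • G)⟫ = -(LH⁻¹ * ‖G‖ ^ 2) := by
      rw [inner_neg_right, real_inner_smul_right, real_inner_self_eq_norm_sq]
    have h3 : ‖-(LH⁻¹ • G)‖ = LH⁻¹ * ‖G‖ := by
      rw [norm_neg, norm_smul, Real.norm_eq_abs, abs_of_nonneg (by positivity)]
    rw [h2, h3] at hd
    have h4 : 0 ≤ Ham g (x - LH⁻¹ • G) := hHnn _
    have h5 : LH * LH⁻¹ = 1 := mul_inv_cancel₀ (ne_of_gt hLH)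
    have e1 : LH / 2 * (LH⁻¹ * ‖G‖) ^ 2 = LH⁻¹ / 2 * ‖G‖ ^ 2 := by
      field_simp
    have hd3 : LH⁻¹ / 2 * ‖G‖ ^ 2 ≤ Ham g x := by
      rw [e1] at hd
      linarith
    have h6 := mul_le_mul_of_nonneg_left hd3 hLH.le
    have e2 : LH * (LH⁻¹ / 2 * ‖G‖ ^ 2) = 1 / 2 * ‖G‖ ^ 2 := by
      field_simp
    rw [e2] at h6
    linarith
  -- key single-step estimate
  have key : ∀ x, ((n : ℝ) ^ 2)⁻¹ *
      ∑ i, ∑ j, Ham g (x - γ • gradient (HamComp g i j) x)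
      ≤ (1 - γ * μ) * Ham g x + LH * γ ^ 2 * σ2 := by
    intro x
    set G := gradient (Ham g) x with hGdef
    have hgid : G = ((n : ℝ) ^ 2)⁻¹ • ∑ i, ∑ j, gradient (HamComp g i j) x :=
      gradient_Ham_eq g hg x
    have hsumG : ∑ i, ∑ j, gradient (HamComp g i j) x = ((n : ℝ) ^ 2) • G := by
      rw [hgid, smul_smul, mul_inv_cancel₀ hn', one_smul]
    -- per-term descent
    have hterm : ∀ i j : Fin n, Ham g (x - γ • gradient (HamComp g i j) x)
        ≤ Ham g x - γ * ⟪G, gradient (HamComp g i j) x⟫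
          + LH / 2 * γ ^ 2 * ‖gradient (HamComp g i j) x‖ ^ 2 := by
      intro i j
      set w := gradient (HamComp g i j) x with hw
      have hd := descent_lemma hdiffH hsmooth x (x - γ • w)
      have h1 : x - γ • w - x = -(γ • w) := by abel
      rw [h1] at hd
      have h2 : ⟪G, -(γ • w)⟫ = -(γ * ⟪G, w⟫) := by
        rw [inner_neg_right, real_inner_smul_right]
      have h3 : ‖-(γ • w)‖ = γ * ‖w‖ := by
        rw [norm_neg, norm_smul, Real.norm_eq_abs, abs_of_nonneg hγ0.le]
      rw [h2, h3] at hd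
      calc Ham g (x - γ • w) ≤ Ham g x + -(γ * ⟪G, w⟫) + LH / 2 * (γ * ‖w‖) ^ 2 := hd
        _ = Ham g x - γ * ⟪G, w⟫ + LH / 2 * γ ^ 2 * ‖w‖ ^ 2 := by ring
    -- sum the descent inequalities
    have hsum1 : ((n : ℝ) ^ 2)⁻¹ * ∑ i, ∑ j, Ham g (x - γ • gradient (HamComp g i j) x)
        ≤ ((n : ℝ) ^ 2)⁻¹ * ∑ i, ∑ j, (Ham g x - γ * ⟪G, gradient (HamComp g i j) x⟫
          + LH / 2 * γ ^ 2 * ‖gradient (HamComp g i j) x‖ ^ 2) := by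
      apply mul_le_mul_of_nonneg_left _ (by positivity)
      exact Finset.sum_le_sum fun i _ => Finset.sum_le_sum fun j _ => hterm i j
    -- compute the summed right-hand side
    have hinner : ∑ i, ∑ j, ⟪G, gradient (HamComp g i j) x⟫ = ((n:ℝ)^2) * ‖G‖^2 := by
      have h1 : ∀ i : Fin n, ∑ j, ⟪G, gradient (HamComp g i j) x⟫
          = ⟪G, ∑ j, gradient (HamComp g i j) x⟫ := fun i => (inner_sum _ _ _).symm
      simp only [h1]
      rw [← inner_sum, hsumG, real_inner_smul_right, real_inner_self_eq_norm_sq]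
    have hsum2 : ∑ i, ∑ j, (Ham g x - γ * ⟪G, gradient (HamComp g i j) x⟫
          + LH / 2 * γ ^ 2 * ‖gradient (HamComp g i j) x‖ ^ 2)
        = ((n:ℝ)^2) * Ham g x - γ * (((n:ℝ)^2) * ‖G‖^2)
          + LH / 2 * γ ^ 2 * ∑ i, ∑ j, ‖gradient (HamComp g i j) x‖ ^ 2 := by
      rw [← hinner]
      simp only [Finset.sum_add_distrib, Finset.sum_sub_distrib, Finset.sum_const,
        Finset.card_univ, Fintype.card_fin, nsmul_eq_mul, ← Finset.mul_sum]
      push_cast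
      ring
    -- bound the second moment
    have hmom : ∑ i, ∑ j, ‖gradient (HamComp g i j) x‖ ^ 2
        ≤ ((n:ℝ)^2) * ‖G‖^2 + 2 * (∑ i, ∑ j,
            ‖gradient (HamComp g i j) x - gradient (HamComp g i j) xstar
              - (gradient (Ham g) x - gradient (Ham g) xstar)‖ ^ 2)
          + 2 * ∑ i, ∑ j, ‖gradient (HamComp g i j) xstar‖ ^ 2 := by
      set a : Fin n → Fin n → EuclideanSpace ℝ (Fin d1 ⊕ Fin d2) := fun i j =>
        gradient (HamComp g i j) x - gradient (HamComp g i j) xstar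
          - (gradient (Ham g) x - gradient (Ham g) xstar) with ha
      set c : Fin n → Fin n → EuclideanSpace ℝ (Fin d1 ⊕ Fin d2) := fun i j =>
        gradient (HamComp g i j) xstar with hc
      have hdecomp : ∀ i j, gradient (HamComp g i j) x = (a i j + c i j) + G := by
        intro i j
        simp only [ha, hc, hGdef, hgradstar]
        abel
      have hzero : ∑ i, ∑ j, (a i j + c i j) = 0 := by
        have : ∀ i j, a i j + c i j = gradient (HamComp g i j) x - G := by
          intro i j; simp only [ha, hc, hgradstar]; abel
        simp only [this, Finset.sum_sub_distrib, hsumG, Finset.sum_const,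
          Finset.card_univ, Fintype.card_fin]
        rw [← Nat.cast_smul_eq_nsmul ℝ, ← Nat.cast_smul_eq_nsmul ℝ, smul_smul, sub_eq_zero]
        norm_num
        rw [← Nat.cast_mul]
        push_cast
        rw [sq]
      have hcross : ∑ i, ∑ j, ⟪a i j + c i j, G⟫ = 0 := by
        have h1 : (⟪∑ i, ∑ j, (a i j + c i j), G⟫ : ℝ)
            = ∑ i, ∑ j, ⟪a i j + c i j, G⟫ := by
          rw [sum_inner]
          exact Finset.sum_congr rfl fun i _ => sum_inner _ _ _
        rw [← h1, hzero]
        simp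
      have hexpand : ∀ i j, ‖gradient (HamComp g i j) x‖ ^ 2
          = ‖a i j + c i j‖ ^ 2 + 2 * ⟪a i j + c i j, G⟫ + ‖G‖ ^ 2 := by
        intro i j
        rw [hdecomp i j]
        exact norm_add_sq_real _ _
      have hACbound : ∀ i j, ‖a i j + c i j‖ ^ 2 ≤ 2 * ‖a i j‖^2 + 2 * ‖c i j‖^2 := by
        intro i j
        have h := norm_add_le (a i j) (c i j)
        nlinarith [norm_nonneg (a i j), norm_nonneg (c i j), norm_nonneg (a i j + c i j),
          sq_nonneg (‖a i j‖ - ‖c i j‖), sq_nonneg (‖a i j‖ + ‖c i j‖)]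
      calc ∑ i, ∑ j, ‖gradient (HamComp g i j) x‖ ^ 2
          = ∑ i, ∑ j, (‖a i j + c i j‖ ^ 2 + 2 * ⟪a i j + c i j, G⟫ + ‖G‖ ^ 2) := by
            exact Finset.sum_congr rfl fun i _ => Finset.sum_congr rfl fun j _ => hexpand i j
        _ = (∑ i, ∑ j, ‖a i j + c i j‖ ^ 2) + 2 * (∑ i, ∑ j, ⟪a i j + c i j, G⟫)
            + ((n:ℝ)^2) * ‖G‖^2 := by
            simp only [Finset.sum_add_distrib, Finset.sum_const, Finset.card_univ,
              Fintype.card_fin, nsmul_eq_mul, ← Finset.mul_sum]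
            push_cast
            ring
        _ ≤ (∑ i, ∑ j, (2 * ‖a i j‖^2 + 2 * ‖c i j‖^2)) + 2 * 0 + ((n:ℝ)^2) * ‖G‖^2 := by
            rw [hcross]
            gcongr
            exact hACbound _ _
        _ = ((n:ℝ)^2) * ‖G‖^2 + 2 * (∑ i, ∑ j, ‖a i j‖ ^ 2)
            + 2 * ∑ i, ∑ j, ‖c i j‖ ^ 2 := by
            simp only [Finset.sum_add_distrib, ← Finset.mul_sum]
            ring
    have hERx := hER x
    have hPLx := hPL x
    have hHx := hHnn x
    -- put everything together
    have hS : ((n:ℝ)^2)⁻¹ * ∑ i, ∑ j, ‖gradient (HamComp g i j) x‖ ^ 2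
        ≤ ‖G‖^2 + 2 * (2 * ρ * Ham g x) + 2 * σ2 := by
      have h2 : ((n:ℝ)^2)⁻¹ * ∑ i, ∑ j, ‖gradient (HamComp g i j) x‖ ^ 2
          ≤ ((n:ℝ)^2)⁻¹ * (((n:ℝ)^2) * ‖G‖^2 + 2 * (∑ i, ∑ j,
            ‖gradient (HamComp g i j) x - gradient (HamComp g i j) xstar
              - (gradient (Ham g) x - gradient (Ham g) xstar)‖ ^ 2)
          + 2 * ∑ i, ∑ j, ‖gradient (HamComp g i j) xstar‖ ^ 2) := by
        apply mul_le_mul_of_nonneg_left hmom (by positivity)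
      calc ((n:ℝ)^2)⁻¹ * ∑ i, ∑ j, ‖gradient (HamComp g i j) x‖ ^ 2 ≤ _ := h2
        _ = ‖G‖^2 + 2 * (((n:ℝ)^2)⁻¹ * ∑ i, ∑ j,
            ‖gradient (HamComp g i j) x - gradient (HamComp g i j) xstar
              - (gradient (Ham g) x - gradient (Ham g) xstar)‖ ^ 2)
          + 2 * (((n:ℝ)^2)⁻¹ * ∑ i, ∑ j, ‖gradient (HamComp g i j) xstar‖ ^ 2) := by
            field_simp
        _ ≤ ‖G‖^2 + 2 * (2 * ρ * Ham g x) + 2 * σ2 := by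
            rw [hσ2]
            gcongr
      -- end hS
    have hfinal : ((n : ℝ) ^ 2)⁻¹ * ∑ i, ∑ j, Ham g (x - γ • gradient (HamComp g i j) x)
        ≤ Ham g x - γ * ‖G‖^2
          + LH / 2 * γ ^ 2 * (‖G‖^2 + 2 * (2 * ρ * Ham g x) + 2 * σ2) := by
      calc ((n : ℝ) ^ 2)⁻¹ * ∑ i, ∑ j, Ham g (x - γ • gradient (HamComp g i j) x)
          ≤ ((n : ℝ) ^ 2)⁻¹ * (((n:ℝ)^2) * Ham g x - γ * (((n:ℝ)^2) * ‖G‖^2)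
            + LH / 2 * γ ^ 2 * ∑ i, ∑ j, ‖gradient (HamComp g i j) x‖ ^ 2) := by
            rw [← hsum2]; exact hsum1
        _ = Ham g x - γ * ‖G‖^2 + LH / 2 * γ ^ 2 *
            (((n:ℝ)^2)⁻¹ * ∑ i, ∑ j, ‖gradient (HamComp g i j) x‖ ^ 2) := by
            field_simp
        _ ≤ Ham g x - γ * ‖G‖^2
            + LH / 2 * γ ^ 2 * (‖G‖^2 + 2 * (2 * ρ * Ham g x) + 2 * σ2) := by
            gcongr
    -- final nlinarith
    have hPL2 : 2 * μ * Ham g x ≤ ‖G‖^2 := by nlinarith [hPLx]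
    nlinarith [hfinal, hPL2, mul_pos hγ0 hγ0, mul_nonneg hγ0.le hHx,
      mul_nonneg (mul_nonneg hγ0.le hγ0.le) hHx,
      mul_nonneg (mul_nonneg hγ0.le hγ0.le) hσ2nn,
      mul_nonneg (mul_nonneg hLH.le (mul_nonneg hγ0.le hγ0.le)) hσ2nn,
      mul_le_mul_of_nonneg_right hγle (mul_nonneg hγ0.le hHx),
      mul_nonneg (mul_nonneg hγ0.le (sub_nonneg.2 hγLH)) (sub_nonneg.2 hPL2)]
  -- shift invariance of shgdExp in t (constant step size)
  have tshift : ∀ (k t : ℕ) (φ : EuclideanSpace ℝ (Fin d1 ⊕ Fin d2) → ℝ)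
      (x : EuclideanSpace ℝ (Fin d1 ⊕ Fin d2)),
      shgdExp g (fun _ => γ) t k φ x = shgdExp g (fun _ => γ) 0 k φ x := by
    intro k
    induction k with
    | zero => intro t φ x; rfl
    | succ k ih =>
      intro t φ x
      simp only [shgdExp]
      congr 1
      apply Finset.sum_congr rfl
      intro i _
      apply Finset.sum_congr rfl
      intro j _
      rw [ih (t+1), ih 1]
  by_cases hall : ∀ x, Ham g x = 0
  · -- degenerate case: H ≡ 0
    have hexp0 : ∀ (k t : ℕ) (x : EuclideanSpace ℝ (Fin d1 ⊕ Fin d2)),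
        shgdExp g (fun _ => γ) t k (Ham g) x = 0 := by
      intro k
      induction k with
      | zero => intro t x; exact hall x
      | succ k ih =>
        intro t x
        simp only [shgdExp, ih]
        simp
    intro k
    rw [hexp0 k 0 x0, hall x0]
    have : 0 ≤ LH * γ * σ2 / μ := by positivity
    simp only [mul_zero, zero_add]
    exact this
  · -- nondegenerate case
    push_neg at hall
    obtain ⟨x1, hx1⟩ := hall
    have hx1pos : 0 < Ham g x1 := lt_of_le_of_ne (hHnn x1) (Ne.symm hx1)
    have hμLH : μ ≤ LH := by nlinarith [hPL x1, hub x1]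
    have hr0 : 0 ≤ 1 - γ * μ := by nlinarith
    have hγμ : 0 < γ * μ := mul_pos hγ0 hμ
    -- main recursion
    have main : ∀ (k : ℕ) (x : EuclideanSpace ℝ (Fin d1 ⊕ Fin d2)),
        shgdExp g (fun _ => γ) 0 k (Ham g) x
        ≤ (1 - γ * μ) ^ k * Ham g x
          + (LH * γ ^ 2 * σ2) * ∑ i ∈ Finset.range k, (1 - γ * μ) ^ i := by
      intro k
      induction k with
      | zero => intro x; simp [shgdExp]
      | succ k ih =>
        intro x
        have hstep : shgdExp g (fun _ => γ) 0 (k+1) (Ham g) x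
            = ((n : ℝ) ^ 2)⁻¹ * ∑ i, ∑ j,
              shgdExp g (fun _ => γ) 0 k (Ham g)
                (x - γ • gradient (HamComp g i j) x) := by
          simp only [shgdExp]
          congr 1
          apply Finset.sum_congr rfl
          intro i _
          apply Finset.sum_congr rfl
          intro j _
          rw [tshift k 1]
        rw [hstep]
        set C := LH * γ ^ 2 * σ2 with hC
        set Sk := ∑ i ∈ Finset.range k, (1 - γ * μ) ^ i with hSk
        have h1 : ((n : ℝ) ^ 2)⁻¹ * ∑ i, ∑ j,
              shgdExp g (fun _ => γ) 0 k (Ham g) (x - γ • gradient (HamComp g i j) x)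
            ≤ ((n : ℝ) ^ 2)⁻¹ * ∑ i, ∑ j,
              ((1 - γ * μ) ^ k * Ham g (x - γ • gradient (HamComp g i j) x) + C * Sk) := by
          apply mul_le_mul_of_nonneg_left _ (by positivity)
          exact Finset.sum_le_sum fun i _ => Finset.sum_le_sum fun j _ => ih _
        have h2 : ((n : ℝ) ^ 2)⁻¹ * ∑ i, ∑ j,
              ((1 - γ * μ) ^ k * Ham g (x - γ • gradient (HamComp g i j) x) + C * Sk)
            = (1 - γ * μ) ^ k * (((n : ℝ) ^ 2)⁻¹ *
                ∑ i, ∑ j, Ham g (x - γ • gradient (HamComp g i j) x)) + C * Sk := by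
          simp only [Finset.sum_add_distrib, Finset.sum_const, Finset.card_univ,
            Fintype.card_fin, nsmul_eq_mul, ← Finset.mul_sum]
          field_simp
        have h3 : (1 - γ * μ) ^ k * (((n : ℝ) ^ 2)⁻¹ *
              ∑ i, ∑ j, Ham g (x - γ • gradient (HamComp g i j) x))
            ≤ (1 - γ * μ) ^ k * ((1 - γ * μ) * Ham g x + C) := by
          apply mul_le_mul_of_nonneg_left _ (pow_nonneg hr0 k)
          rw [hC]
          exact key x
        calc ((n : ℝ) ^ 2)⁻¹ * ∑ i, ∑ j,
              shgdExp g (fun _ => γ) 0 k (Ham g) (x - γ • gradient (HamComp g i j) x)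
            ≤ (1 - γ * μ) ^ k * (((n : ℝ) ^ 2)⁻¹ *
                ∑ i, ∑ j, Ham g (x - γ • gradient (HamComp g i j) x)) + C * Sk := by
              rw [← h2]; exact h1
          _ ≤ (1 - γ * μ) ^ k * ((1 - γ * μ) * Ham g x + C) + C * Sk := by linarith
          _ = (1 - γ * μ) ^ (k+1) * Ham g x
              + C * ∑ i ∈ Finset.range (k+1), (1 - γ * μ) ^ i := by
              rw [geom_sum_succ']
              ring
    intro k
    have hgeo : ∑ i ∈ Finset.range k, (1 - γ * μ) ^ i ≤ 1 / (γ * μ) := by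
      have h1 : (∑ i ∈ Finset.range k, (1 - γ * μ) ^ i) * ((1 - γ * μ) - 1)
          = (1 - γ * μ) ^ k - 1 := geom_sum_mul _ _
      have h2 : 0 ≤ (1 - γ * μ) ^ k := pow_nonneg hr0 k
      rw [le_div_iff₀ hγμ]
      nlinarith
    have hfin := main k x0
    have h4 : (LH * γ ^ 2 * σ2) * ∑ i ∈ Finset.range k, (1 - γ * μ) ^ i
        ≤ LH * γ * σ2 / μ := by
      have h5 : (LH * γ ^ 2 * σ2) * ∑ i ∈ Finset.range k, (1 - γ * μ) ^ i
          ≤ (LH * γ ^ 2 * σ2) * (1 / (γ * μ)) :=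
        mul_le_mul_of_nonneg_left hgeo (by positivity)
      calc (LH * γ ^ 2 * σ2) * ∑ i ∈ Finset.range k, (1 - γ * μ) ^ i
          ≤ (LH * γ ^ 2 * σ2) * (1 / (γ * μ)) := h5
        _ = LH * γ * σ2 / μ := by
            field_simp
    linarith

end
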